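/- arXiv:math/9809085 — 5 statements merged into one kernel-verified Lean document; each statement's English description precedes it below -/
import Mathlib

section
/- Let A be a unital Banach algebra and let (I_α) be an increasing net of closed two-sided ideals of A, with I the closure of ⋃ I_α. Then for every a ∈ A, ‖a + I_α‖ → ‖a + I‖, the net of quotient norms decreasing to the quotient norm in A/I. -/
open Filter Metric

/-- Let `A` be a unital Banach algebra and `(I i)` an increasing net of closed two-sided
ideals, with `I` the closure of their union.  Then for each `a ∈ A` the quotient norms
`‖a + I i‖ = infDist a (I i)` converge, decreasing, to `‖a + I‖`. -/
theorem quotient_norm_tendsto_of_monotone_net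
    (A : Type*) [NormedRing A] [NormedAlgebra ℂ A] [CompleteSpace A]
    [NormOneClass A]
    (ι : Type*) [Preorder ι] [IsDirected ι (· ≤ ·)] [Nonempty ι]
    (I : ι → TwoSidedIdeal A)
    (hclosed : ∀ i, IsClosed ((I i : Set A)))
    (hinc : ∀ i j : ι, i ≤ j → (I i : Set A) ⊆ (I j : Set A))
    (a : A) :
    Antitone (fun i => infDist a (I i : Set A)) ∧
      Tendsto (fun i => infDist a (I i : Set A)) atTop
        (nhds (infDist a (closure (⋃ i, (I i : Set A))))) := by
  have hne : ∀ i, ((I i : Set A)).Nonempty := fun i => ⟨0, (I i).zero_mem⟩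
  have hanti : Antitone (fun i => infDist a (I i : Set A)) := by
    intro i j hij
    exact infDist_le_infDist_of_subset (hinc i j hij) (hne i)
  refine ⟨hanti, ?_⟩
  have hbdd : BddBelow (Set.range fun i => infDist a (I i : Set A)) :=
    ⟨0, by rintro x ⟨i, rfl⟩; exact infDist_nonneg⟩
  have htend := tendsto_atTop_ciInf hanti hbdd
  have hU : infDist a (closure (⋃ i, (I i : Set A))) = infDist a (⋃ i, (I i : Set A)) :=
    infDist_closure
  have hUne : (⋃ i, (I i : Set A)).Nonempty := ⟨0, Set.mem_iUnion.2 ⟨Classical.arbitrary ι, (I _).zero_mem⟩⟩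
  have key : (⨅ i, infDist a (I i : Set A)) = infDist a (⋃ i, (I i : Set A)) := by
    apply le_antisymm
    · apply le_of_forall_pos_lt_add
      intro ε hε
      have : infDist a (⋃ i, (I i : Set A)) < infDist a (⋃ i, (I i : Set A)) + ε := by linarith
      obtain ⟨y, hy, hlt⟩ := (infDist_lt_iff hUne).1 this
      obtain ⟨i, hyi⟩ := Set.mem_iUnion.1 hy
      calc (⨅ i, infDist a (I i : Set A)) ≤ infDist a (I i : Set A) := ciInf_le hbdd i
        _ ≤ dist a y := infDist_le_dist_of_mem hyi
        _ < _ := hlt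
    · exact le_ciInf fun i =>
        infDist_le_infDist_of_subset (Set.subset_iUnion (fun i => (I i : Set A)) i) (hne i)
  rw [hU, ← key]
  exact htend
end

section
/- Let A be a unital Banach algebra and let (I_α) be a decreasing net of closed two-sided ideals with intersection I. If a ∉ I then liminf_α ‖a + I_α‖ > 0. -/
open Filter Metric

/-- Let `A` be a unital Banach algebra and `(I i)` a decreasing net of closed two-sided
ideals with intersection `I`.  If `a ∉ I` then `liminf ‖a + I i‖ > 0`
(the normality property of the net with respect to `I`). -/
theorem liminf_quotient_norm_pos
    (A : Type*) [NormedRing A] [NormedAlgebra ℂ A] [CompleteSpace A]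
    [NormOneClass A]
    (ι : Type*) [Preorder ι] [IsDirected ι (· ≤ ·)] [Nonempty ι]
    (I : ι → TwoSidedIdeal A)
    (hclosed : ∀ i, IsClosed ((I i : Set A)))
    (hdec : ∀ i j : ι, i ≤ j → (I j : Set A) ⊆ (I i : Set A))
    (a : A) (ha : a ∉ ⋂ i, (I i : Set A)) :
    0 < Filter.liminf (fun i => infDist a (I i : Set A)) atTop := by
  rw [Set.mem_iInter] at ha
  push_neg at ha
  obtain ⟨i₀, hi₀⟩ := ha
  have hne : ∀ i, ((I i : Set A)).Nonempty := fun i => ⟨0, (I i).zero_mem⟩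
  have hδ : 0 < infDist a (I i₀ : Set A) :=
    ((hclosed i₀).notMem_iff_infDist_pos (hne i₀)).mp hi₀
  have hcb : IsCoboundedUnder (· ≥ ·) atTop (fun i => infDist a (I i : Set A)) := by
    refine isCoboundedUnder_ge_of_le atTop (x := dist a 0) ?_
    intro i
    exact infDist_le_dist_of_mem (I i).zero_mem
  have hev : ∀ᶠ i in atTop, infDist a (I i₀ : Set A) ≤ infDist a (I i : Set A) := by
    filter_upwards [eventually_ge_atTop i₀] with i hi
    exact infDist_le_infDist_of_subset (hdec i₀ i hi) (hne i)
  exact lt_of_lt_of_le hδ (le_liminf_of_le hcb hev)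
end

section
/- Let A be a uniform algebra on its maximal ideal space Max(A), let X be a closed subset of Max(A), and let F be a p-set in Max(A). If f ∈ A vanishes on X, then the quotient norm of f modulo the ideal I(X ∪ F) of functions vanishing on X ∪ F equals sup{|f(y)| : y ∈ F}. -/
open Metric

/-- `E` is a peak set for the uniform algebra `A`. -/
def IsPeakSet {K : Type*} [TopologicalSpace K]
    (A : Subalgebra ℂ C(K, ℂ)) (E : Set K) : Prop :=
  ∃ f ∈ A, (∀ x ∈ E, f x = 1) ∧ ∀ x ∉ E, ‖f x‖ < 1

/-- `F` is a p-set (an intersection of peak sets) for the uniform algebra `A`. -/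
def IsPSet {K : Type*} [TopologicalSpace K]
    (A : Subalgebra ℂ C(K, ℂ)) (F : Set K) : Prop :=
  ∃ 𝒮 : Set (Set K), 𝒮.Nonempty ∧ (∀ E ∈ 𝒮, IsPeakSet A E) ∧ F = ⋂₀ 𝒮

section Aux

variable {K : Type*} [TopologicalSpace K] (A : Subalgebra ℂ C(K, ℂ))

lemma peak_abs_le_one {E : Set K} {p : C(K, ℂ)} (h1 : ∀ x ∈ E, p x = 1)
    (h2 : ∀ x ∉ E, ‖p x‖ < 1) (x : K) : ‖p x‖ ≤ 1 := by
  by_cases hx : x ∈ E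
  · simp [h1 x hx]
  · exact (h2 x hx).le

lemma isPeakSet_univ : IsPeakSet A Set.univ :=
  ⟨1, one_mem _, fun x _ => by simp, fun x hx => absurd (Set.mem_univ x) hx⟩

lemma IsPeakSet.inter {E₁ E₂ : Set K} (h₁ : IsPeakSet A E₁) (h₂ : IsPeakSet A E₂) :
    IsPeakSet A (E₁ ∩ E₂) := by
  obtain ⟨p, hpA, hp1, hp2⟩ := h₁
  obtain ⟨q, hqA, hq1, hq2⟩ := h₂
  refine ⟨p * q, mul_mem hpA hqA, fun x hx => by simp [hp1 x hx.1, hq1 x hx.2], fun x hx => ?_⟩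
  rw [Set.mem_inter_iff] at hx
  push_neg at hx
  simp only [ContinuousMap.mul_apply, norm_mul]
  by_cases h : x ∈ E₁
  · calc ‖p x‖ * ‖q x‖ ≤ 1 * ‖q x‖ := by
          gcongr; exact peak_abs_le_one hp1 hp2 x
    _ = ‖q x‖ := one_mul _
    _ < 1 := hq2 x (hx h)
  · calc ‖p x‖ * ‖q x‖ ≤ ‖p x‖ * 1 := by
          gcongr; exact peak_abs_le_one hq1 hq2 x
    _ = ‖p x‖ := mul_one _
    _ < 1 := hp2 x h

lemma isPeakSet_finsetInter {ι : Type*} (E : ι → Set K) (t : Finset ι)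
    (h : ∀ i ∈ t, IsPeakSet A (E i)) : IsPeakSet A (⋂ i ∈ t, E i) := by
  classical
  induction t using Finset.induction_on with
  | empty => simpa using isPeakSet_univ A
  | @insert a s hni ih =>
    rw [Finset.set_biInter_insert]
    exact IsPeakSet.inter A (h a (Finset.mem_insert_self a s))
      (ih fun i hi => h i (Finset.mem_insert_of_mem hi))

lemma IsPeakSet.isClosed {E : Set K} (h : IsPeakSet A E) : IsClosed E := by
  obtain ⟨p, _, hp1, hp2⟩ := h
  have hE : E = p ⁻¹' {1} := by
    ext x
    constructor
    · intro hx; exact hp1 x hx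
    · intro hx
      by_contra hxE
      have h2 := hp2 x hxE
      simp only [Set.mem_preimage, Set.mem_singleton_iff] at hx
      rw [hx] at h2
      simp at h2
  rw [hE]
  exact IsClosed.preimage p.continuous isClosed_singleton

end Aux

/-- Let `A` be a uniform algebra on the compact Hausdorff space `K`, `X ⊆ K` closed and
`F` a p-set.  If `f ∈ A` vanishes on `X`, then the quotient norm of `f` modulo the ideal
`I(X ∪ F)` of elements of `A` vanishing on `X ∪ F` equals `sup {|f y| : y ∈ F}`. -/
theorem quotient_norm_eq_sup_on_pSet
    (K : Type*) [TopologicalSpace K] [CompactSpace K] [T2Space K]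
    (A : Subalgebra ℂ C(K, ℂ)) (hA : IsClosed (A : Set C(K, ℂ)))
    (hsep : ∀ x y : K, x ≠ y → ∃ f ∈ A, f x ≠ f y)
    (X : Set K) (hX : IsClosed X) (F : Set K) (hF : IsPSet A F)
    (f : C(K, ℂ)) (hfA : f ∈ A) (hfX : ∀ x ∈ X, f x = 0) :
    infDist f {g : C(K, ℂ) | g ∈ A ∧ ∀ x ∈ X ∪ F, g x = 0}
      = sSup ((fun y => ‖f y‖) '' F) := by
  classical
  obtain ⟨𝒮, h𝒮ne, h𝒮peak, hFdef⟩ := hF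
  set S : Set C(K, ℂ) := {g : C(K, ℂ) | g ∈ A ∧ ∀ x ∈ X ∪ F, g x = 0} with hSdef
  set s : ℝ := sSup ((fun y => ‖f y‖) '' F) with hsdef
  have hSne : S.Nonempty := ⟨0, zero_mem A, fun x _ => by simp⟩
  have hbdd : BddAbove ((fun y => ‖f y‖) '' F) := by
    refine ⟨‖f‖, ?_⟩
    rintro _ ⟨y, _, rfl⟩
    simpa using f.norm_coe_le_norm y
  have hsnn : 0 ≤ s := by
    apply Real.sSup_nonneg
    rintro _ ⟨y, _, rfl⟩
    positivity
  have hlow : s ≤ infDist f S := by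
    apply Real.sSup_le _ infDist_nonneg
    rintro _ ⟨y, hy, rfl⟩
    by_contra hlt
    push_neg at hlt
    obtain ⟨g, hg, hdlt⟩ := (infDist_lt_iff hSne).mp hlt
    have h1 : ‖f y‖ = ‖(f - g) y‖ := by
      simp [ContinuousMap.sub_apply, hg.2 y (Or.inr hy)]
    rw [dist_eq_norm] at hdlt
    exact absurd hdlt (not_lt.mpr (h1 ▸ (f - g).norm_coe_le_norm y))
  have hupp : infDist f S ≤ s := by
    refine le_of_forall_pos_le_add fun ε hε => ?_
    set U : Set K := {x | ‖f x‖ < s + ε} with hUdef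
    have hUopen : IsOpen U :=
      isOpen_lt (continuous_norm.comp f.continuous) continuous_const
    have hFU : F ⊆ U := fun y hy =>
      lt_of_le_of_lt (le_csSup hbdd ⟨y, hy, rfl⟩) (lt_add_of_pos_right _ hε)
    have hcomp : IsCompact Uᶜ := hUopen.isClosed_compl.isCompact
    have hcover : Uᶜ ⊆ ⋃ E : 𝒮, ((E : Set K))ᶜ := by
      intro x hx
      by_contra hxx
      simp only [Set.mem_iUnion, Set.mem_compl_iff, not_exists, not_not] at hxx
      have hxF : x ∈ F := by
        rw [hFdef]
        exact Set.mem_sInter.mpr fun E hE => hxx ⟨E, hE⟩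
      exact hx (hFU hxF)
    obtain ⟨t, ht⟩ := hcomp.elim_finite_subcover (fun E : 𝒮 => ((E : Set K))ᶜ)
      (fun E => (IsPeakSet.isClosed A (h𝒮peak E E.2)).isOpen_compl) hcover
    set E' : Set K := ⋂ i ∈ t, ((i : Set K)) with hE'def
    have hE'peak : IsPeakSet A E' :=
      isPeakSet_finsetInter A _ t fun i _ => h𝒮peak i i.2
    have hFE' : F ⊆ E' := by
      intro x hx
      simp only [hE'def, Set.mem_iInter]
      intro i _
      have hx' : x ∈ ⋂₀ 𝒮 := hFdef ▸ hx
      exact hx' i i.2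
    have hE'U : E' ⊆ U := by
      intro x hx
      by_contra hxU
      have := ht hxU
      simp only [Set.mem_iUnion] at this
      obtain ⟨i, hit, hxi⟩ := this
      have : x ∈ (i : Set K) := by
        simp only [hE'def, Set.mem_iInter] at hx
        exact hx i hit
      exact hxi this
    obtain ⟨p, hpA, hp1, hp2⟩ := hE'peak
    have hple : ∀ x, ‖p x‖ ≤ 1 := peak_abs_le_one hp1 hp2
    obtain ⟨r, hr0, hr1, hrle⟩ : ∃ r, 0 ≤ r ∧ r < 1 ∧ ∀ x ∉ U, ‖p x‖ ≤ r := by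
      rcases Set.eq_empty_or_nonempty Uᶜ with h | h
      · exact ⟨0, le_refl 0, one_pos, fun x hx => absurd (h ▸ hx : x ∈ (∅ : Set K)) (Set.notMem_empty x)⟩
      · obtain ⟨x₀, hx₀, hmax⟩ := hcomp.exists_isMaxOn h
          ((continuous_norm.comp p.continuous).continuousOn)
        refine ⟨‖p x₀‖, by positivity, hp2 x₀ fun hmem => hx₀ (hE'U hmem), ?_⟩
        intro x hx
        exact hmax hx
    have hrn : Filter.Tendsto (fun n : ℕ => ‖f‖ * r ^ n) Filter.atTop (nhds 0) := by
      simpa using (tendsto_pow_atTop_nhds_zero_of_lt_one hr0 hr1).const_mul ‖f‖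
    have hpos : (0 : ℝ) < s + ε := by positivity
    obtain ⟨n, hn⟩ := (hrn.eventually (eventually_lt_nhds hpos)).exists
    set g : C(K, ℂ) := f * (1 - p ^ n) with hgdef
    have hgA : g ∈ A := mul_mem hfA (sub_mem (one_mem A) (pow_mem hpA n))
    have hgz : ∀ x ∈ X ∪ F, g x = 0 := by
      rintro x (hx | hx)
      · simp [hgdef, hfX x hx]
      · have hp1x : p x = 1 := hp1 x (hFE' hx)
        simp [hgdef, hp1x]
    have hdiff : f - g = f * p ^ n := by
      rw [hgdef]; ring
    calc infDist f S ≤ dist f g := infDist_le_dist_of_mem ⟨hgA, hgz⟩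
      _ = ‖f * p ^ n‖ := by rw [dist_eq_norm, hdiff]
      _ ≤ s + ε := by
          rw [ContinuousMap.norm_le _ hpos.le]
          intro x
          simp only [ContinuousMap.mul_apply, ContinuousMap.pow_apply, norm_mul, norm_pow]
          by_cases hx : x ∈ U
          · calc ‖f x‖ * ‖p x‖ ^ n
                ≤ ‖f x‖ * 1 := by
                  gcongr
                  exact pow_le_one₀ (by positivity) (hple x)
            _ = ‖f x‖ := mul_one _
            _ ≤ s + ε := le_of_lt hx
          · calc ‖f x‖ * ‖p x‖ ^ n
                ≤ ‖f‖ * r ^ n := by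
                  gcongr
                  · simpa using f.norm_coe_le_norm x
                  · exact hrle x hx
            _ ≤ s + ε := hn.le
  linarith
end

section
/- Let A = C^1[0,1], let C ⊆ [0,1] be closed and D ⊆ [0,1]² be closed with D ⊆ C × C and D containing all off-diagonal points of C × C. Define I(C,D) = {f ∈ A : f(x) = 0 for all x ∈ C, and φ_{x,y}(f) = 0 for all (x,y) ∈ D}. Then I(C,D) is a closed ideal of A. -/
open Set

/-- The divided-difference functional `φ_{x,y}` on `C¹[0,1]`. -/
noncomputable def phiC1 (f : ℝ → ℂ) (x y : ℝ) : ℂ :=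
  if x = y then derivWithin f (Icc 0 1) x else (f x - f y) / (x - y)

/-- Membership in the algebra `A = C¹[0,1]`. -/
def MemC1 (f : ℝ → ℂ) : Prop := ContDiffOn ℝ 1 f (Icc 0 1)

/-- The `C¹`-norm `‖f‖ = ‖f‖_∞ + ‖f'‖_∞` on `[0,1]`. -/
noncomputable def C1norm (f : ℝ → ℂ) : ℝ :=
  sSup ((fun x => ‖f x‖) '' Icc 0 1) +
    sSup ((fun x => ‖derivWithin f (Icc 0 1) x‖) '' Icc 0 1)

/-- The set `I(C,D) = {f ∈ C¹[0,1] : f = 0 on C, φ_{x,y}(f) = 0 on D}`. -/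
def MemICD (C : Set ℝ) (D : Set (ℝ × ℝ)) (f : ℝ → ℂ) : Prop :=
  MemC1 f ∧ (∀ x ∈ C, f x = 0) ∧ ∀ p ∈ D, phiC1 f p.1 p.2 = 0

lemma uD01 : UniqueDiffOn ℝ (Icc (0:ℝ) 1) := uniqueDiffOn_Icc zero_lt_one

lemma memC1_diffOn {f : ℝ → ℂ} (hf : MemC1 f) : DifferentiableOn ℝ f (Icc 0 1) :=
  hf.differentiableOn one_ne_zero

/-- Both sup-norm components bound pointwise values. -/
lemma le_C1norm {h : ℝ → ℂ} (hh : MemC1 h) {x : ℝ} (hx : x ∈ Icc (0:ℝ) 1) :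
    ‖h x‖ ≤ C1norm h ∧ ‖derivWithin h (Icc 0 1) x‖ ≤ C1norm h := by
  have hc : ContinuousOn h (Icc 0 1) := hh.continuousOn
  have hc' : ContinuousOn (derivWithin h (Icc 0 1)) (Icc 0 1) :=
    hh.continuousOn_derivWithin uD01 le_rfl
  have hb1 : BddAbove ((fun x => ‖h x‖) '' Icc 0 1) :=
    isCompact_Icc.bddAbove_image hc.norm
  have hb2 : BddAbove ((fun x => ‖derivWithin h (Icc 0 1) x‖) '' Icc 0 1) :=
    isCompact_Icc.bddAbove_image hc'.norm
  have h1 : ‖h x‖ ≤ sSup ((fun x => ‖h x‖) '' Icc 0 1) := le_csSup hb1 ⟨x, hx, rfl⟩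
  have h2 : ‖derivWithin h (Icc 0 1) x‖ ≤
      sSup ((fun x => ‖derivWithin h (Icc 0 1) x‖) '' Icc 0 1) := le_csSup hb2 ⟨x, hx, rfl⟩
  have n1 : (0:ℝ) ≤ sSup ((fun x => ‖h x‖) '' Icc 0 1) :=
    le_trans (norm_nonneg _) (le_csSup hb1 ⟨x, hx, rfl⟩)
  have n2 : (0:ℝ) ≤ sSup ((fun x => ‖derivWithin h (Icc 0 1) x‖) '' Icc 0 1) :=
    le_trans (norm_nonneg _) (le_csSup hb2 ⟨x, hx, rfl⟩)
  constructor
  · calc ‖h x‖ ≤ _ := h1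
    _ ≤ C1norm h := le_add_of_nonneg_right n2
  · calc ‖derivWithin h (Icc 0 1) x‖ ≤ _ := h2
    _ ≤ C1norm h := le_add_of_nonneg_left n1

/-- `I(C,D)` is a closed ideal of `A = C¹[0,1]`: it contains `0`, is closed under
addition, under scalar multiplication, under multiplication by elements of `A`, and is
topologically closed in `A` for the norm `‖f‖_∞ + ‖f'‖_∞`. -/
theorem ICD_closed_ideal
    (C : Set ℝ) (hC : IsClosed C) (hCI : C ⊆ Icc 0 1)
    (D : Set (ℝ × ℝ)) (hD : IsClosed D) (hDC : D ⊆ C ×ˢ C)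
    (hDdiag : ∀ x ∈ C, ∀ y ∈ C, x ≠ y → (x, y) ∈ D) :
    MemICD C D 0 ∧
      (∀ f g, MemICD C D f → MemICD C D g → MemICD C D (f + g)) ∧
      (∀ (c : ℂ) f, MemICD C D f → MemICD C D (c • f)) ∧
      (∀ f g, MemC1 f → MemICD C D g → MemICD C D (f * g)) ∧
      (∀ f, MemC1 f → (∀ ε > 0, ∃ g, MemICD C D g ∧ C1norm (f - g) < ε) →
        MemICD C D f) := by
  have hmemIcc : ∀ p ∈ D, p.1 ∈ C ∧ p.2 ∈ C := fun p hp => hDC hp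
  refine ⟨?_, ?_, ?_, ?_, ?_⟩
  · -- zero
    refine ⟨contDiffOn_const, fun x _ => rfl, fun p hp => ?_⟩
    obtain ⟨h1, h2⟩ := hmemIcc p hp
    unfold phiC1
    split_ifs with hxy
    · show derivWithin (fun _ => (0:ℂ)) (Icc 0 1) p.1 = 0
      simp
    · simp
  · -- addition
    rintro f g ⟨hf1, hf2, hf3⟩ ⟨hg1, hg2, hg3⟩
    refine ⟨hf1.add hg1, fun x hx => by simp [hf2 x hx, hg2 x hx], fun p hp => ?_⟩
    obtain ⟨h1, h2⟩ := hmemIcc p hp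
    unfold phiC1
    split_ifs with hxy
    · have h3 := hf3 p hp; have h4 := hg3 p hp
      unfold phiC1 at h3 h4
      rw [if_pos hxy] at h3 h4
      have hder : derivWithin (fun y => f y + g y) (Icc 0 1) p.1 =
          derivWithin f (Icc 0 1) p.1 + derivWithin g (Icc 0 1) p.1 :=
        derivWithin_fun_add (memC1_diffOn hf1 p.1 (hCI h1))
          (memC1_diffOn hg1 p.1 (hCI h1))
      show derivWithin (fun y => f y + g y) (Icc 0 1) p.1 = 0
      rw [hder, h3, h4, add_zero]
    · simp only [Pi.add_apply, hf2 p.1 h1, hg2 p.1 h1, hf2 p.2 h2, hg2 p.2 h2]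
      ring_nf
  · -- scalar multiplication
    rintro c f ⟨hf1, hf2, hf3⟩
    refine ⟨hf1.const_smul c, fun x hx => by simp [hf2 x hx], fun p hp => ?_⟩
    obtain ⟨h1, h2⟩ := hmemIcc p hp
    unfold phiC1
    split_ifs with hxy
    · have hder : derivWithin (fun y => c • f y) (Icc 0 1) p.1 =
          c • derivWithin f (Icc 0 1) p.1 :=
        derivWithin_fun_const_smul c (memC1_diffOn hf1 p.1 (hCI h1))
      have h3 := hf3 p hp
      unfold phiC1 at h3
      rw [if_pos hxy] at h3
      show derivWithin (fun y => c • f y) (Icc 0 1) p.1 = 0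
      rw [hder, h3, smul_zero]
    · simp only [Pi.smul_apply, hf2 p.1 h1, hf2 p.2 h2]
      simp
  · -- multiplication by A
    rintro f g hf1 ⟨hg1, hg2, hg3⟩
    refine ⟨hf1.mul hg1, fun x hx => by simp [hg2 x hx], fun p hp => ?_⟩
    obtain ⟨h1, h2⟩ := hmemIcc p hp
    unfold phiC1
    split_ifs with hxy
    · have hder : derivWithin (fun y => f y * g y) (Icc 0 1) p.1 =
          derivWithin f (Icc 0 1) p.1 * g p.1 + f p.1 * derivWithin g (Icc 0 1) p.1 :=
        derivWithin_fun_mul (memC1_diffOn hf1 p.1 (hCI h1))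
          (memC1_diffOn hg1 p.1 (hCI h1))
      have h3 := hg3 p hp
      unfold phiC1 at h3
      rw [if_pos hxy] at h3
      show derivWithin (fun y => f y * g y) (Icc 0 1) p.1 = 0
      rw [hder, h3, hg2 p.1 h1]
      ring
    · simp only [Pi.mul_apply, hg2 p.1 h1, hg2 p.2 h2]
      ring_nf
  · -- topological closedness
    intro f hf1 happ
    have key : ∀ x ∈ Icc (0:ℝ) 1,
        (∀ ε > 0, ∃ g : ℝ → ℂ, MemICD C D g ∧ C1norm (f - g) < ε ∧
          ‖(f - g) x‖ ≤ C1norm (f - g) ∧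
          ‖derivWithin (f - g) (Icc 0 1) x‖ ≤ C1norm (f - g)) := by
      intro x hx ε hε
      obtain ⟨g, hg, hlt⟩ := happ ε hε
      have hfg : MemC1 (f - g) := hf1.sub hg.1
      obtain ⟨b1, b2⟩ := le_C1norm hfg hx
      exact ⟨g, hg, hlt, b1, b2⟩
    have hvanish : ∀ x ∈ C, f x = 0 := by
      intro x hx
      have hx1 : x ∈ Icc (0:ℝ) 1 := hCI hx
      have : ∀ ε > 0, ‖f x‖ < ε := by
        intro ε hε
        obtain ⟨g, hg, hlt, b1, _⟩ := key x hx1 ε hε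
        have : (f - g) x = f x := by simp [hg.2.1 x hx]
        rw [this] at b1
        exact lt_of_le_of_lt b1 hlt
      have hle : ‖f x‖ ≤ 0 := by
        by_contra hcon
        push_neg at hcon
        exact absurd (this _ hcon) (lt_irrefl _)
      exact norm_eq_zero.mp (le_antisymm hle (norm_nonneg _))
    refine ⟨hf1, hvanish, fun p hp => ?_⟩
    obtain ⟨h1, h2⟩ := hmemIcc p hp
    unfold phiC1
    split_ifs with hxy
    · -- diagonal: derivWithin f x = 0
      have hx1 : p.1 ∈ Icc (0:ℝ) 1 := hCI h1
      have : ∀ ε > 0, ‖derivWithin f (Icc 0 1) p.1‖ < ε := by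
        intro ε hε
        obtain ⟨g, hg, hlt, _, b2⟩ := key p.1 hx1 ε hε
        have hdg : derivWithin g (Icc 0 1) p.1 = 0 := by
          have h3 := hg.2.2 p hp
          unfold phiC1 at h3
          rwa [if_pos hxy] at h3
        have hsub : derivWithin (f - g) (Icc 0 1) p.1 =
            derivWithin f (Icc 0 1) p.1 - derivWithin g (Icc 0 1) p.1 :=
          derivWithin_sub (memC1_diffOn hf1 p.1 hx1)
            (memC1_diffOn hg.1 p.1 hx1)
        rw [hsub, hdg, sub_zero] at b2
        exact lt_of_le_of_lt b2 hlt
      have hle : ‖derivWithin f (Icc 0 1) p.1‖ ≤ 0 := by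
        by_contra hcon
        push_neg at hcon
        exact absurd (this _ hcon) (lt_irrefl _)
      exact norm_eq_zero.mp (le_antisymm hle (norm_nonneg _))
    · rw [hvanish p.1 h1, hvanish p.2 h2]
      ring_nf
end

section
/- Let [0,1] be the unit interval, M ⊆ [0,1] a closed set, and x₀ ∈ [0,1] \ M with d = dist(x₀, M) > 0. Then for every c ∈ ℂ and every ε > 0 there exists g ∈ C^1[0,1] such that g(x₀) = c, g vanishes on M, and ‖g‖_∞ + ‖g'‖_∞ < |c| + |c|/d + ε. -/
open Set Metric

lemma hasDerivAt_mul_abs (t : ℝ) : HasDerivAt (fun s : ℝ => s * |s|) (2 * |t|) t := by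
  rcases lt_trichotomy t 0 with ht | rfl | ht
  · have h : HasDerivAt (fun s : ℝ => -(s * s)) (2 * |t|) t := by
      have h0 := ((hasDerivAt_id t).mul (hasDerivAt_id t)).neg
      refine h0.congr_deriv ?_
      simp only [id]
      rw [abs_of_neg ht]; ring
    refine h.congr_of_eventuallyEq ?_
    filter_upwards [Iio_mem_nhds ht] with s hs
    rw [abs_of_neg hs]; ring
  · rw [hasDerivAt_iff_tendsto_slope]
    have h2 : Filter.Tendsto (fun s : ℝ => |s|) (nhdsWithin 0 {(0:ℝ)}ᶜ) (nhds |(0:ℝ)|) :=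
      (continuous_abs.tendsto 0).mono_left nhdsWithin_le_nhds
    rw [show (2 * |(0:ℝ)|) = |(0:ℝ)| by norm_num]
    refine h2.congr' ?_
    filter_upwards [self_mem_nhdsWithin] with s hs
    have hs' : s ≠ 0 := hs
    rw [slope_def_field]
    field_simp
    ring
  · have h : HasDerivAt (fun s : ℝ => s * s) (2 * |t|) t := by
      have h0 := (hasDerivAt_id t).mul (hasDerivAt_id t)
      refine h0.congr_deriv ?_
      simp only [id]
      rw [abs_of_pos ht]; ring
    refine h.congr_of_eventuallyEq ?_
    filter_upwards [Ioi_mem_nhds ht] with s hs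
    rw [abs_of_pos hs]

lemma hasDerivAt_mul_abs_shift (a t : ℝ) :
    HasDerivAt (fun s : ℝ => (s + a) * |s + a|) (2 * |t + a|) t := by
  simpa [Function.comp_def] using (hasDerivAt_mul_abs (t + a)).comp t ((hasDerivAt_id t).add_const a)

/-- A `C¹` smoothed tent function: equals `1` at `0`, vanishes for `|t| ≥ d`,
with derivative bounded by `1/(d-b)`. -/
noncomputable def phiAux (d b t : ℝ) : ℝ :=
  ((t + d) * |t + d| - (t + (d - b)) * |t + (d - b)| - (t + b) * |t + b|
    + (t + -b) * |t + -b| + (t + (b - d)) * |t + (b - d)| - (t + -d) * |t + -d|)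
    / (4 * b * (d - b))

noncomputable def psiAux (d b t : ℝ) : ℝ :=
  (|t + d| - |t + (d - b)| - |t + b| + |t + -b| + |t + (b - d)| - |t + -d|)
    / (2 * b * (d - b))

lemma phiAux_hasDerivAt (d b : ℝ) (hb : 0 < b) (hbd : b < d - b) (t : ℝ) :
    HasDerivAt (phiAux d b) (psiAux d b t) t := by
  have h := ((((((hasDerivAt_mul_abs_shift d t).sub (hasDerivAt_mul_abs_shift (d - b) t)).sub
      (hasDerivAt_mul_abs_shift b t)).add (hasDerivAt_mul_abs_shift (-b) t)).add
      (hasDerivAt_mul_abs_shift (b - d) t)).sub (hasDerivAt_mul_abs_shift (-d) t)).div_const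
      (4 * b * (d - b))
  refine h.congr_deriv ?_
  unfold psiAux
  have h1 : b ≠ 0 := ne_of_gt hb
  have h2 : d - b ≠ 0 := by intro h; rw [h] at hbd; linarith
  field_simp
  ring

lemma psiAux_abs_le (d b : ℝ) (hb : 0 < b) (hbd : b < d - b) (t : ℝ) :
    |psiAux d b t| ≤ 1 / (d - b) := by
  have hden : 0 < 2 * b * (d - b) := by nlinarith
  have hB : |(|t + d| - |t + (d - b)| - |t + b| + |t + -b| + |t + (b - d)| - |t + -d|)| ≤ 2 * b := by
    rw [abs_le]
    constructor <;>
    · rcases abs_cases (t + d) with ⟨e1, s1⟩ | ⟨e1, s1⟩ <;>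
      rcases abs_cases (t + (d - b)) with ⟨e2, s2⟩ | ⟨e2, s2⟩ <;>
      rcases abs_cases (t + b) with ⟨e3, s3⟩ | ⟨e3, s3⟩ <;>
      rcases abs_cases (t + -b) with ⟨e4, s4⟩ | ⟨e4, s4⟩ <;>
      rcases abs_cases (t + (b - d)) with ⟨e5, s5⟩ | ⟨e5, s5⟩ <;>
      rcases abs_cases (t + -d) with ⟨e6, s6⟩ | ⟨e6, s6⟩ <;>
      rw [e1, e2, e3, e4, e5, e6] <;> linarith
  unfold psiAux
  rw [abs_div, abs_of_pos hden, div_le_div_iff₀ hden (by linarith)]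
  nlinarith [abs_nonneg (|t + d| - |t + (d - b)| - |t + b| + |t + -b| + |t + (b - d)| - |t + -d|)]

lemma psiAux_nonpos (d b : ℝ) (hb : 0 < b) (hbd : b < d - b) (t : ℝ) (ht : 0 ≤ t) :
    psiAux d b t ≤ 0 := by
  have hden : 0 < 2 * b * (d - b) := by nlinarith
  have hB : |t + d| - |t + (d - b)| - |t + b| + |t + -b| + |t + (b - d)| - |t + -d| ≤ 0 := by
    rcases abs_cases (t + d) with ⟨e1, s1⟩ | ⟨e1, s1⟩ <;>
    rcases abs_cases (t + (d - b)) with ⟨e2, s2⟩ | ⟨e2, s2⟩ <;>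
    rcases abs_cases (t + b) with ⟨e3, s3⟩ | ⟨e3, s3⟩ <;>
    rcases abs_cases (t + -b) with ⟨e4, s4⟩ | ⟨e4, s4⟩ <;>
    rcases abs_cases (t + (b - d)) with ⟨e5, s5⟩ | ⟨e5, s5⟩ <;>
    rcases abs_cases (t + -d) with ⟨e6, s6⟩ | ⟨e6, s6⟩ <;>
    rw [e1, e2, e3, e4, e5, e6] <;> linarith
  exact div_nonpos_of_nonpos_of_nonneg hB hden.le

lemma phiAux_even (d b t : ℝ) : phiAux d b (-t) = phiAux d b t := by
  unfold phiAux
  rw [show -t + d = -(t + -d) by ring, show -t + (d - b) = -(t + (b - d)) by ring,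
    show -t + b = -(t + -b) by ring, show -t + -b = -(t + b) by ring,
    show -t + (b - d) = -(t + (d - b)) by ring, show -t + -d = -(t + d) by ring]
  simp only [abs_neg]
  ring

lemma phiAux_zero (d b : ℝ) (hb : 0 < b) (hbd : b < d - b) (t : ℝ) (ht : d ≤ t) :
    phiAux d b t = 0 := by
  unfold phiAux
  rw [div_eq_zero_iff]
  left
  rw [abs_of_nonneg (by linarith : (0:ℝ) ≤ t + d),
    abs_of_nonneg (by linarith : (0:ℝ) ≤ t + (d - b)),
    abs_of_nonneg (by linarith : (0:ℝ) ≤ t + b),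
    abs_of_nonneg (by linarith : (0:ℝ) ≤ t + -b),
    abs_of_nonneg (by linarith : (0:ℝ) ≤ t + (b - d)),
    abs_of_nonneg (by linarith : (0:ℝ) ≤ t + -d)]
  ring

lemma phiAux_one (d b : ℝ) (hb : 0 < b) (hbd : b < d - b) : phiAux d b 0 = 1 := by
  unfold phiAux
  rw [abs_of_nonneg (by linarith : (0:ℝ) ≤ 0 + d),
    abs_of_nonneg (by linarith : (0:ℝ) ≤ 0 + (d - b)),
    abs_of_nonneg (by linarith : (0:ℝ) ≤ 0 + b),
    abs_of_nonpos (by linarith : (0:ℝ) + -b ≤ 0),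
    abs_of_nonpos (by linarith : (0:ℝ) + (b - d) ≤ 0),
    abs_of_nonpos (by linarith : (0:ℝ) + -d ≤ 0)]
  have h1 : b ≠ 0 := ne_of_gt hb
  have h2 : d - b ≠ 0 := by intro h; rw [h] at hbd; linarith
  field_simp
  ring

lemma phiAux_mem (d b : ℝ) (hb : 0 < b) (hbd : b < d - b) (t : ℝ) :
    0 ≤ phiAux d b t ∧ phiAux d b t ≤ 1 := by
  have hd0 : 0 < d := by linarith
  have hanti : AntitoneOn (phiAux d b) (Ici 0) := by
    refine antitoneOn_of_deriv_nonpos (convex_Ici 0) ?_ ?_ ?_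
    · exact fun x _ => ((phiAux_hasDerivAt d b hb hbd x).differentiableAt).continuousAt.continuousWithinAt
    · exact fun x _ => ((phiAux_hasDerivAt d b hb hbd x).differentiableAt).differentiableWithinAt
    · intro x hx
      rw [interior_Ici] at hx
      rw [(phiAux_hasDerivAt d b hb hbd x).deriv]
      exact psiAux_nonpos d b hb hbd x (le_of_lt hx)
  have key : ∀ s : ℝ, 0 ≤ s → 0 ≤ phiAux d b s ∧ phiAux d b s ≤ 1 := by
    intro s hs
    constructor
    · rcases le_or_gt s d with h | h
      · have := hanti (mem_Ici.mpr hs) (mem_Ici.mpr (by linarith : (0:ℝ) ≤ d)) h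
        rwa [phiAux_zero d b hb hbd d le_rfl] at this
      · rw [phiAux_zero d b hb hbd s h.le]
    · have := hanti (mem_Ici.mpr le_rfl) (mem_Ici.mpr hs) hs
      rwa [phiAux_one d b hb hbd] at this
  rcases le_or_gt 0 t with h | h
  · exact key t h
  · rw [← phiAux_even]
    exact key (-t) (by linarith)

lemma phiAux_vanish (d b : ℝ) (hb : 0 < b) (hbd : b < d - b) (t : ℝ) (ht : d ≤ |t|) :
    phiAux d b t = 0 := by
  rcases abs_cases t with ⟨e, _⟩ | ⟨e, _⟩
  · exact phiAux_zero d b hb hbd t (e ▸ ht)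
  · rw [← phiAux_even]
    exact phiAux_zero d b hb hbd (-t) (e ▸ ht)

lemma psiAux_continuous (d b : ℝ) : Continuous (psiAux d b) := by
  unfold psiAux
  fun_prop

/-- Given a closed set `M ⊆ [0,1]` and `x₀ ∈ [0,1] \ M` at distance `d > 0` from `M`,
for every `c ∈ ℂ` and `ε > 0` there is `g ∈ C¹[0,1]` with `g x₀ = c`, `g = 0` on `M`,
and `‖g‖_∞ + ‖g'‖_∞ < |c| + |c|/d + ε`. -/
theorem exists_C1_peak_function
    (M : Set ℝ) (hM : IsClosed M) (hMI : M ⊆ Icc 0 1)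
    (x₀ : ℝ) (hx₀ : x₀ ∈ Icc (0:ℝ) 1 \ M)
    (hd : 0 < infDist x₀ M)
    (c : ℂ) (ε : ℝ) (hε : 0 < ε) :
    ∃ g : ℝ → ℂ, MemC1 g ∧ g x₀ = c ∧ (∀ x ∈ M, g x = 0) ∧
      C1norm g < ‖c‖ + ‖c‖ / infDist x₀ M + ε := by
  set d := infDist x₀ M with hdd
  set b := min (d / 4) (ε * d ^ 2 / (2 * (‖c‖ + 1))) with hbb
  have hb : 0 < b := lt_min (by linarith) (by positivity)
  have hb4 : b ≤ d / 4 := min_le_left _ _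
  have hb2 : b ≤ ε * d ^ 2 / (2 * (‖c‖ + 1)) := min_le_right _ _
  have hbd : b < d - b := by linarith
  have hdb0 : 0 < d - b := by linarith
  set g : ℝ → ℂ := fun x => ((phiAux d b (x - x₀) : ℝ) : ℂ) * c with hgg
  have hgderiv : ∀ x : ℝ, HasDerivAt g (((psiAux d b (x - x₀) : ℝ) : ℂ) * c) x := by
    intro x
    have h1 : HasDerivAt (fun x : ℝ => phiAux d b (x - x₀)) (psiAux d b (x - x₀)) x := by
      simpa [Function.comp_def] using (phiAux_hasDerivAt d b hb hbd (x - x₀)).comp x ((hasDerivAt_id x).sub_const x₀)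
    exact (h1.ofReal_comp).mul_const c
  have hgC1 : ContDiff ℝ 1 g := by
    rw [contDiff_one_iff_deriv]
    constructor
    · exact fun x => (hgderiv x).differentiableAt
    · have : deriv g = fun x => ((psiAux d b (x - x₀) : ℝ) : ℂ) * c :=
        funext fun x => (hgderiv x).deriv
      rw [this]
      exact ((Complex.continuous_ofReal.comp
        ((psiAux_continuous d b).comp (continuous_id.sub continuous_const))).mul continuous_const)
  have hnorm : ∀ x : ℝ, ‖g x‖ = |phiAux d b (x - x₀)| * ‖c‖ := by
    intro x
    rw [hgg]
    simp [Complex.norm_real, Real.norm_eq_abs, norm_mul]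
  have hgx₀ : g x₀ = c := by
    rw [hgg]
    simp [phiAux_one d b hb hbd]
  have hgM : ∀ x ∈ M, g x = 0 := by
    intro x hx
    have h1 : d ≤ |x - x₀| := by
      have := infDist_le_dist_of_mem (x := x₀) hx
      rw [Real.dist_eq] at this
      rw [abs_sub_comm]
      exact this
    rw [hgg]
    simp [phiAux_vanish d b hb hbd _ h1]
  -- sup norm bound
  have hS1 : sSup ((fun x => ‖g x‖) '' Icc 0 1) ≤ ‖c‖ := by
    apply csSup_le
    · exact (Nonempty.image _ ⟨0, by norm_num⟩)
    · rintro y ⟨x, -, rfl⟩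
      dsimp only
      rw [hnorm x]
      have h := phiAux_mem d b hb hbd (x - x₀)
      have : |phiAux d b (x - x₀)| ≤ 1 := abs_le.mpr ⟨by linarith [h.1], h.2⟩
      calc |phiAux d b (x - x₀)| * ‖c‖ ≤ 1 * ‖c‖ :=
            mul_le_mul_of_nonneg_right this (norm_nonneg c)
        _ = ‖c‖ := one_mul _
  have hS2 : sSup ((fun x => ‖derivWithin g (Icc 0 1) x‖) '' Icc 0 1) ≤ ‖c‖ / (d - b) := by
    apply csSup_le
    · exact (Nonempty.image _ ⟨0, by norm_num⟩)
    · rintro y ⟨x, hx, rfl⟩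
      dsimp only
      have hdw : derivWithin g (Icc 0 1) x = deriv g x :=
        (hgderiv x).differentiableAt.derivWithin ((uniqueDiffOn_Icc (by norm_num)) x hx)
      rw [hdw, (hgderiv x).deriv]
      have h := psiAux_abs_le d b hb hbd (x - x₀)
      have : ‖((psiAux d b (x - x₀) : ℝ) : ℂ) * c‖ = |psiAux d b (x - x₀)| * ‖c‖ := by
        simp [Complex.norm_real, Real.norm_eq_abs, norm_mul]
      rw [this]
      calc |psiAux d b (x - x₀)| * ‖c‖ ≤ (1 / (d - b)) * ‖c‖ :=
            mul_le_mul_of_nonneg_right h (norm_nonneg c)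
        _ = ‖c‖ / (d - b) := by ring
  have hkey : ‖c‖ / (d - b) < ‖c‖ / d + ε := by
    have hN : (0:ℝ) ≤ ‖c‖ := norm_nonneg c
    have hb2' : b * (2 * (‖c‖ + 1)) ≤ ε * d ^ 2 := by
      rw [← le_div_iff₀ (by positivity)]
      exact hb2
    have h1 : ‖c‖ / (d - b) - ‖c‖ / d = ‖c‖ * b / ((d - b) * d) := by
      field_simp
      ring
    have h3 : (3/4 : ℝ) * (ε * d ^ 2) ≤ ε * ((d - b) * d) := by
      nlinarith [mul_nonneg hε.le (mul_nonneg hd.le (by linarith : (0:ℝ) ≤ d / 4 - b))]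
    have h5 : ‖c‖ * b < (3/2 : ℝ) * b * (‖c‖ + 1) := by nlinarith
    have h6 : (3/2 : ℝ) * b * (‖c‖ + 1) ≤ (3/4 : ℝ) * (ε * d ^ 2) := by linarith
    have h2 : ‖c‖ * b / ((d - b) * d) < ε := by
      rw [div_lt_iff₀ (by positivity)]
      calc ‖c‖ * b < (3/2 : ℝ) * b * (‖c‖ + 1) := h5
        _ ≤ (3/4 : ℝ) * (ε * d ^ 2) := h6
        _ ≤ ε * ((d - b) * d) := h3
    linarith
  refine ⟨g, hgC1.contDiffOn, hgx₀, hgM, ?_⟩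
  unfold C1norm
  calc sSup ((fun x => ‖g x‖) '' Icc 0 1) +
      sSup ((fun x => ‖derivWithin g (Icc 0 1) x‖) '' Icc 0 1)
      ≤ ‖c‖ + ‖c‖ / (d - b) := add_le_add hS1 hS2
    _ < ‖c‖ + (‖c‖ / d + ε) := by linarith
    _ = ‖c‖ + ‖c‖ / d + ε := by ring
end
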